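/- The digraph DPillar_{n,k} is a Cayley graph: there is a group G of order k·(n/2)^k and a generating set S ⊆ G closed under inverses, together with a bijection φ from G to the nodes of DPillar_{n,k}, such that (φ(g), φ(h)) is an edge of DPillar_{n,k} if and only if g^{-1}h ∈ S. -/

import Mathlib

/-- A node of the digraph DPillar_{n,k}: a column index in `ZMod k` together with a
row-index, a length-`k` string over an alphabet of size `n/2`. -/
abbrev DNode (n k : ℕ) := ZMod k × (ZMod k → ZMod (n / 2))

/-- The edge relation of the digraph DPillar_{n,k}: c-edges, a-edges, b-edges, d-edges. -/
def DPillarEdge (n k : ℕ) (u w : DNode n k) : Prop :=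
  (w.1 = u.1 + 1 ∧ ∀ i, i ≠ u.1 → w.2 i = u.2 i) ∨
  (w.1 = u.1 - 1 ∧ ∀ i, i ≠ u.1 - 1 → w.2 i = u.2 i) ∨
  (w.1 = u.1 ∧ w.2 ≠ u.2 ∧ ∀ i, i ≠ u.1 → w.2 i = u.2 i) ∨
  (w.1 = u.1 ∧ w.2 ≠ u.2 ∧ ∀ i, i ≠ u.1 - 1 → w.2 i = u.2 i)

namespace DPillarAux

variable (n k : ℕ)

/-- Left translation by the wreath-product element `(a, f)`. -/
def pil (a : ZMod k) (f : ZMod k → ZMod (n / 2)) : Equiv.Perm (DNode n k) where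
  toFun p := (a + p.1, fun i => f i + p.2 (i - a))
  invFun p := (p.1 - a, fun i => p.2 (i + a) - f (i + a))
  left_inv p := by
    refine Prod.ext (by simp) (funext fun i => ?_)
    simp
  right_inv p := by
    refine Prod.ext (by simp) (funext fun i => ?_)
    simp

@[simp] lemma pil_apply (a f p) : pil n k a f p = (a + p.1, fun i => f i + p.2 (i - a)) := rfl

lemma pil_mul (a b f g) :
    pil n k a f * pil n k b g = pil n k (a + b) (fun i => f i + g (i - a)) := by
  refine Equiv.ext fun p => ?_
  simp only [Equiv.Perm.mul_apply, pil_apply]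
  refine Prod.ext (by ring) (funext fun i => ?_)
  show f i + (g (i - a) + p.2 (i - a - b)) = f i + g (i - a) + p.2 (i - (a + b))
  rw [sub_sub]
  ring

lemma pil_one : pil n k 0 0 = 1 := by
  refine Equiv.ext fun p => ?_
  simp [pil_apply]

lemma pil_inv (a f) : (pil n k a f)⁻¹ = pil n k (-a) (fun i => -f (i + a)) := by
  refine inv_eq_of_mul_eq_one_right (Equiv.ext fun p => ?_)
  simp [Equiv.Perm.mul_apply, pil_apply, sub_add_cancel]

/-- The group of left translations. -/
def Gp : Subgroup (Equiv.Perm (DNode n k)) where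
  carrier := {σ | ∃ a f, σ = pil n k a f}
  one_mem' := ⟨0, 0, (pil_one n k).symm⟩
  mul_mem' := by
    rintro σ τ ⟨a, f, rfl⟩ ⟨b, g, rfl⟩
    exact ⟨_, _, (pil_mul n k a b f g)⟩
  inv_mem' := by
    rintro σ ⟨a, f, rfl⟩
    exact ⟨_, _, pil_inv n k a f⟩

def PG (a : ZMod k) (f : ZMod k → ZMod (n / 2)) : Gp n k := ⟨pil n k a f, a, f, rfl⟩

lemma PG_congr {a b : ZMod k} {f g : ZMod k → ZMod (n / 2)} (h1 : a = b) (h2 : f = g) :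
    PG n k a f = PG n k b g := by subst h1; subst h2; rfl

lemma PG_mul (a b f g) :
    PG n k a f * PG n k b g = PG n k (a + b) (fun i => f i + g (i - a)) :=
  Subtype.ext (pil_mul n k a b f g)

lemma PG_one : PG n k 0 0 = 1 := Subtype.ext (pil_one n k)

def e : DNode n k := (0, fun _ => 0)

lemma pil_e (a f) : pil n k a f (e n k) = (a, f) := by
  refine Prod.ext (by simp [e]) (funext fun i => by simp [e])

def S : Set (Gp n k) :=
  {s | DPillarEdge n k (e n k) ((s : Equiv.Perm (DNode n k)) (e n k))}

def phi : Gp n k ≃ DNode n k where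
  toFun g := (g : Equiv.Perm (DNode n k)) (e n k)
  invFun p := PG n k p.1 p.2
  left_inv g := by
    obtain ⟨σ, a, f, rfl⟩ := g
    apply Subtype.ext
    simp [PG, e]
  right_inv p := by simp [PG, e]

lemma forall_shift (a c : ZMod k) (v w : ZMod k → ZMod (n / 2)) :
    (∀ i, i ≠ a + c → w (i - a) = v (i - a)) ↔ ∀ i, i ≠ c → w i = v i := by
  constructor
  · intro h i hi
    have := h (a + i) (by simpa using hi)
    simpa using this
  · intro h i hi
    have h2 : i - a ≠ c := by
      intro hc
      apply hi
      rw [← hc]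
      ring
    rw [h _ h2]

lemma fun_shift_ne (a : ZMod k) (f v w : ZMod k → ZMod (n / 2)) :
    ((fun i => f i + w (i - a)) = fun i => f i + v (i - a)) ↔ w = v := by
  constructor
  · intro h
    funext j
    have := congrFun h (j + a)
    simpa using this
  · rintro rfl; rfl

lemma edge_shift (a f) (u w : DNode n k) :
    DPillarEdge n k (pil n k a f u) (pil n k a f w) ↔ DPillarEdge n k u w := by
  have h1 : a + u.1 + 1 = a + (u.1 + 1) := by ring
  have h2 : a + u.1 - 1 = a + (u.1 - 1) := by ring
  simp only [DPillarEdge, pil_apply, h1, h2, add_right_inj, ne_eq, fun_shift_ne]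
  simp only [← ne_eq, forall_shift]

lemma edge_symm (u w : DNode n k) : DPillarEdge n k u w → DPillarEdge n k w u := by
  rintro (⟨h1, h2⟩ | ⟨h1, h2⟩ | ⟨h1, h2, h3⟩ | ⟨h1, h2, h3⟩)
  · right; left
    have hw : w.1 - 1 = u.1 := by rw [h1]; ring
    exact ⟨by rw [h1]; ring, fun i hi => (h2 i (by rwa [hw] at hi)).symm⟩
  · left
    exact ⟨by rw [h1]; ring, fun i hi => (h2 i (by rwa [h1] at hi)).symm⟩
  · right; right; left
    exact ⟨h1.symm, h2.symm, fun i hi => (h3 i (by rwa [h1] at hi)).symm⟩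
  · right; right; right
    refine ⟨h1.symm, h2.symm, fun i hi => (h3 i ?_).symm⟩
    rwa [h1] at hi

def dlt (i : ZMod k) (t : ZMod (n / 2)) : ZMod k → ZMod (n / 2) :=
  fun j => if j = i then t else 0

lemma sigma1_mem : PG n k 1 0 ∈ S n k := by
  show DPillarEdge n k (e n k) (pil n k 1 0 (e n k))
  rw [pil_e]
  left
  exact ⟨by simp [e], fun i _ => rfl⟩

lemma PG_nat_pow (j : ℕ) : PG n k (j : ZMod k) 0 = (PG n k 1 0) ^ j := by
  induction j with
  | zero => simpa using PG_one n k
  | succ j ih =>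
    rw [pow_succ, ← ih, PG_mul]
    exact PG_congr n k (by push_cast; ring) (funext fun i => by simp)

lemma PG_shift_mem (a : ZMod k) [NeZero k] :
    PG n k a 0 ∈ Subgroup.closure (S n k) := by
  have : PG n k a 0 = (PG n k 1 0) ^ a.val := by
    rw [← PG_nat_pow]
    exact PG_congr n k (by simp [ZMod.natCast_val, ZMod.cast_id]) rfl
  rw [this]
  exact pow_mem (Subgroup.subset_closure (sigma1_mem n k)) _

lemma PG0_add (f g) : PG n k 0 f * PG n k 0 g = PG n k 0 (f + g) := by
  rw [PG_mul]
  exact PG_congr n k (by ring) (funext fun i => by simp)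

lemma dlt_mem (i : ZMod k) (t : ZMod (n / 2)) [NeZero k] :
    PG n k 0 (dlt n k i t) ∈ Subgroup.closure (S n k) := by
  by_cases ht : t = 0
  · have hd : dlt n k i t = 0 := funext fun j => by simp [dlt, ht]
    rw [hd, PG_one]
    exact one_mem _
  · have hS : PG n k 0 (dlt n k 0 t) ∈ S n k := by
      show DPillarEdge n k (e n k) (pil n k 0 (dlt n k 0 t) (e n k))
      rw [pil_e]
      right; right; left
      refine ⟨rfl, ?_, fun j hj => by simp [e] at hj; simp [dlt, e, hj]⟩
      intro h
      exact ht (by simpa [dlt, e] using congrFun h 0)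
    have key : PG n k i 0 * PG n k 0 (dlt n k 0 t) * (PG n k i 0)⁻¹
        = PG n k 0 (dlt n k i t) := by
      rw [mul_inv_eq_iff_eq_mul, PG_mul, PG_mul]
      refine PG_congr n k (by ring) (funext fun j => ?_)
      simp [dlt, sub_eq_zero]
    rw [← key]
    exact mul_mem (mul_mem (PG_shift_mem n k i) (Subgroup.subset_closure hS))
      (inv_mem (PG_shift_mem n k i))

lemma PG_fun_mem (g : ZMod k → ZMod (n / 2)) [NeZero k] :
    PG n k 0 g ∈ Subgroup.closure (S n k) := by
  have hrepr : g = ∑ i : ZMod k, dlt n k i (g i) := by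
    funext j
    simp [dlt]
  have main : ∀ s : Finset (ZMod k),
      PG n k 0 (∑ i ∈ s, dlt n k i (g i)) ∈ Subgroup.closure (S n k) := by
    intro s
    induction s using Finset.induction with
    | empty => rw [Finset.sum_empty, PG_one]; exact one_mem _
    | insert _ _ hx ih =>
      rw [Finset.sum_insert hx, ← PG0_add]
      exact mul_mem (dlt_mem n k _ _) ih
  have := main Finset.univ
  rwa [← hrepr] at this

lemma closure_top [NeZero k] : Subgroup.closure (S n k) = ⊤ := by
  rw [eq_top_iff]
  rintro ⟨σ, a, f, rfl⟩ -
  have hdecomp : (⟨pil n k a f, a, f, rfl⟩ : Gp n k)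
      = PG n k a 0 * PG n k 0 (fun i => f (i + a)) := by
    rw [PG_mul]
    exact (PG_congr n k (by ring) (funext fun i => by simp)).symm
  rw [hdecomp]
  exact mul_mem (PG_shift_mem n k a) (PG_fun_mem n k _)

end DPillarAux

open DPillarAux

/-- DPillar_{n,k} is a Cayley graph: there is a group `G` of order
k·(n/2)^k, a generating set `S ⊆ G` closed under inverses, and a bijection `φ` from
`G` to the nodes such that `(φ g, φ h)` is an edge iff `g⁻¹ * h ∈ S`. -/
theorem dpillar_cayley (n k : ℕ) (hn : Even n) (hn2 : 2 ≤ n) (hk : 2 ≤ k) :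
    ∃ (G : Subgroup (Equiv.Perm (DNode n k))) (S : Set G) (φ : G ≃ DNode n k),
      Nat.card G = k * (n / 2) ^ k ∧
      Subgroup.closure S = ⊤ ∧
      (∀ s ∈ S, s⁻¹ ∈ S) ∧
      ∀ g h : G, DPillarEdge n k (φ g) (φ h) ↔ g⁻¹ * h ∈ S := by
  haveI : NeZero k := ⟨by omega⟩
  haveI : NeZero (n / 2) := ⟨by omega⟩
  refine ⟨Gp n k, S n k, phi n k, ?_, closure_top n k, ?_, ?_⟩
  · rw [Nat.card_congr (phi n k)]
    show Nat.card (ZMod k × (ZMod k → ZMod (n / 2))) = _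
    rw [Nat.card_prod, Nat.card_fun, Nat.card_zmod, Nat.card_zmod]
  · rintro ⟨σ, a, f, rfl⟩ hs
    have hsym : DPillarEdge n k (pil n k a f (e n k)) (e n k) := edge_symm n k _ _ hs
    have key := (edge_shift n k (-a) (fun i => -f (i + a)) (pil n k a f (e n k))
      (e n k)).mpr hsym
    rw [← pil_inv] at key
    show DPillarEdge n k (e n k) _
    have h1 : (pil n k a f)⁻¹ (pil n k a f (e n k)) = e n k := Equiv.symm_apply_apply _ _
    rw [h1] at key
    exact key
  · intro g h
    obtain ⟨a', f', hinv⟩ := (g⁻¹).2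
    have key := edge_shift n k a' f' ((g : Equiv.Perm (DNode n k)) (e n k))
      ((h : Equiv.Perm (DNode n k)) (e n k))
    rw [← hinv] at key
    have hco : ((g⁻¹ : Gp n k) : Equiv.Perm (DNode n k))
        = ((g : Equiv.Perm (DNode n k)))⁻¹ := rfl
    rw [hco, Equiv.Perm.inv_def, Equiv.symm_apply_apply] at key
    show DPillarEdge n k ((g : Equiv.Perm (DNode n k)) (e n k))
      ((h : Equiv.Perm (DNode n k)) (e n k)) ↔ _
    rw [← key]
    exact Iff.rfl
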